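/- Let a < b be real numbers and 1 < α < 2. Let g : ℝ → ℝ be continuously differentiable on [a,b] and suppose g attains its global maximum over [a,b] at a point ξ ∈ (a,b). If the conformable derivative of g of order α at ξ exists, i.e. there is a real number L such that (g'(ξ + ε·(ξ−a)^{2−α}) − g'(ξ))/ε tends to L as ε → 0 (ε ≠ 0), then L ≤ 0. -/

import Mathlib

open Set Filter Topology

/-- Conformable-derivative analogue of the first-derivative test at an interior
global maximum: if `g` is `C¹` on `[a, b]`, attains its global maximum over `[a, b]`
at `ξ ∈ (a, b)`, and the conformable derivative of order `α` (`1 < α < 2`, base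
point `a`) of `g` at `ξ` exists with value `L`, then `L ≤ 0`. -/
theorem conformable_deriv_nonpos_at_interior_max
    (a b α : ℝ) (hab : a < b) (hα1 : 1 < α) (hα2 : α < 2)
    (g : ℝ → ℝ) (hg : ContDiffOn ℝ 1 g (Set.Icc a b))
    (ξ : ℝ) (hξ : ξ ∈ Set.Ioo a b)
    (hmax : ∀ t ∈ Set.Icc a b, g t ≤ g ξ)
    (L : ℝ)
    (hL : Tendsto (fun ε : ℝ =>
        (deriv g (ξ + ε * (ξ - a) ^ ((2 : ℝ) - α)) - deriv g ξ) / ε)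
      (𝓝[≠] (0 : ℝ)) (𝓝 L)) :
    L ≤ 0 := by
  by_contra hL0
  push_neg at hL0
  set c : ℝ := (ξ - a) ^ ((2 : ℝ) - α) with hc_def
  have hc : 0 < c := Real.rpow_pos_of_pos (by linarith [hξ.1]) _
  -- deriv g ξ = 0 at the interior maximum
  have hloc : IsLocalMax g ξ := by
    filter_upwards [Icc_mem_nhds hξ.1 hξ.2] using hmax
  have hd0 : deriv g ξ = 0 := hloc.deriv_eq_zero
  -- eventually the quotient is positive
  have hev : ∀ᶠ ε in 𝓝[≠] (0 : ℝ),
      0 < (deriv g (ξ + ε * c) - deriv g ξ) / ε := hL.eventually (eventually_gt_nhds hL0)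
  have hev' : ∀ᶠ ε in 𝓝[>] (0 : ℝ), 0 < deriv g (ξ + ε * c) := by
    have hle : 𝓝[>] (0 : ℝ) ≤ 𝓝[≠] (0 : ℝ) :=
      nhdsWithin_mono _ (fun x hx => ne_of_gt hx)
    filter_upwards [hle hev, self_mem_nhdsWithin] with ε h hεpos
    rw [hd0, sub_zero] at h
    exact (div_pos_iff.mp h).resolve_right (fun h' => absurd hεpos (not_lt.mpr h'.2.le)) |>.1
  obtain ⟨δ, hδ, hIoo⟩ := mem_nhdsGT_iff_exists_Ioo_subset.mp hev'
  have hδ0 : 0 < δ := hδ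
  set β : ℝ := min (ξ + δ * c / 2) ((ξ + b) / 2) with hβ_def
  have hξβ : ξ < β := by
    apply lt_min
    · nlinarith
    · linarith [hξ.2]
  have hβb : β < b := by
    have : (ξ + b) / 2 < b := by linarith [hξ.2]
    exact lt_of_le_of_lt (min_le_right _ _) this
  have haξ : a < ξ := hξ.1
  have hsub : Icc ξ β ⊆ Icc a b := Icc_subset_Icc haξ.le hβb.le
  -- deriv g positive on Ioo ξ β
  have hpos : ∀ t ∈ Ioo ξ β, 0 < deriv g t := by
    intro t ht
    have htξ : ξ < t := ht.1
    have htβ : t < β := ht.2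
    have h1 : t < ξ + δ * c / 2 := lt_of_lt_of_le htβ (min_le_left _ _)
    have hε : (t - ξ) / c ∈ Ioo (0 : ℝ) δ := by
      constructor
      · exact div_pos (by linarith) hc
      · rw [div_lt_iff₀ hc]; nlinarith
    have h2 : 0 < deriv g (ξ + (t - ξ) / c * c) := hIoo hε
    have heq : ξ + (t - ξ) / c * c = t := by field_simp; ring
    rwa [heq] at h2
  have hcont : ContinuousOn g (Icc ξ β) := hg.continuousOn.mono hsub
  have hmono : StrictMonoOn g (Icc ξ β) := by
    apply strictMonoOn_of_deriv_pos (convex_Icc ξ β) hcont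
    intro x hx
    rw [interior_Icc] at hx
    exact hpos x hx
  have hlt : g ξ < g β :=
    hmono (left_mem_Icc.mpr hξβ.le) (right_mem_Icc.mpr hξβ.le) hξβ
  have : g β ≤ g ξ := hmax β ⟨by linarith, hβb.le⟩
  linarith
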